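/- arXiv:1009.0837 — 2 statements merged into one kernel-verified Lean document; each statement's English description precedes it below -/
import Mathlib

section
/- Let E be a pseudo effect algebra satisfying (RDP) and let m₁, …, mₙ ∈ J(E). Then for every x ∈ E: (⋁ᵢ₌₁ⁿ mᵢ)(x) = sup{m₁(x₁) + ⋯ + mₙ(xₙ) : x = x₁ + ⋯ + xₙ, x₁, …, xₙ ∈ E} and (⋀ᵢ₌₁ⁿ mᵢ)(x) = inf{m₁(x₁) + ⋯ + mₙ(xₙ) : x = x₁ + ⋯ + xₙ, x₁, …, xₙ ∈ E}, where ⋁ and ⋀ are the lattice operations of J(E) under ≤⁺. -/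
/-- A pseudo effect algebra: a partial algebra `(E; +, 0, 1)` where the partial
addition is encoded as `padd : E → E → Option E` (`padd a b = some c` means
`a + b` is defined and equals `c`). -/
class PseudoEffectAlgebra (E : Type) where
  padd : E → E → Option E
  pzero : E
  pone : E
  /-- (i) `a+b` and `(a+b)+c` exist iff `b+c` and `a+(b+c)` exist ... -/
  assoc_defined : ∀ a b c : E,
    (∃ x, padd a b = some x ∧ (padd x c).isSome) ↔
      (∃ y, padd b c = some y ∧ (padd a y).isSome)
  /-- ... and in this case `(a+b)+c = a+(b+c)`. -/
  assoc_eq : ∀ a b c x y : E, padd a b = some x → padd b c = some y →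
    padd x c = padd a y
  /-- (ii) there is exactly one `d` with `a + d = 1`. -/
  exists_unique_right : ∀ a : E, ∃! d, padd a d = some pone
  /-- (ii) there is exactly one `e` with `e + a = 1`. -/
  exists_unique_left : ∀ a : E, ∃! e, padd e a = some pone
  /-- (iii) if `a+b` exists, there are `d, e` with `a+b = d+a = b+e`. -/
  shift : ∀ a b c : E, padd a b = some c →
    ∃ d e, padd d a = some c ∧ padd b e = some c
  /-- (iv) if `1+a` exists then `a = 0`. -/
  one_add : ∀ a : E, (padd pone a).isSome → a = pzero
  /-- (iv) if `a+1` exists then `a = 0`. -/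
  add_one : ∀ a : E, (padd a pone).isSome → a = pzero

namespace PseudoEffectAlgebra

variable {E : Type} [PseudoEffectAlgebra E]

/-- The induced partial order: `a ≤ b` iff `b = a + c` for some `c ∈ E`. -/
def pLe (a b : E) : Prop := ∃ c, padd a c = some b

/-- The Riesz Decomposition Property (RDP). -/
def RDP (E : Type) [PseudoEffectAlgebra E] : Prop :=
  ∀ a₁ a₂ b₁ b₂ c : E, padd a₁ a₂ = some c → padd b₁ b₂ = some c →
    ∃ d₁ d₂ d₃ d₄ : E, padd d₁ d₂ = some a₁ ∧ padd d₃ d₄ = some a₂ ∧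
      padd d₁ d₃ = some b₁ ∧ padd d₂ d₄ = some b₂

/-- A signed measure on `E`. -/
def IsSignedMeasure (m : E → ℝ) : Prop :=
  ∀ a b c : E, padd a b = some c → m c = m a + m b

/-- A (positive) measure on `E`. -/
def IsMeasure (m : E → ℝ) : Prop :=
  IsSignedMeasure m ∧ ∀ a : E, 0 ≤ m a

/-- A state on `E`. -/
def IsState (s : E → ℝ) : Prop := IsMeasure s ∧ s pone = 1

/-- A Jordan signed measure: a difference of two measures. -/
def IsJordan (m : E → ℝ) : Prop :=
  ∃ m₁ m₂ : E → ℝ, IsMeasure m₁ ∧ IsMeasure m₂ ∧ m = m₁ - m₂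

/-- `m ≤⁺ m'` iff `m' - m` is a (positive) measure. -/
def MLe (m m' : E → ℝ) : Prop := IsMeasure (m' - m)

/-- The (partial) sum `x₁ + ⋯ + xₙ` of a nonempty list of elements of `E`. -/
def lsum : List E → Option E
  | [] => some pzero
  | [a] => some a
  | a :: b :: l => (lsum (b :: l)).bind (fun s => padd a s)

/-- `m` is the supremum, in the po-group `J(E)` of Jordan signed measures ordered
by `≤⁺`, of the set `S`. -/
def IsSupIn (S : Set (E → ℝ)) (m : E → ℝ) : Prop :=
  IsJordan m ∧ (∀ t ∈ S, MLe t m) ∧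
    ∀ h : E → ℝ, IsJordan h → (∀ t ∈ S, MLe t h) → MLe m h

/-- `m` is the infimum, in the po-group `J(E)` of Jordan signed measures ordered
by `≤⁺`, of the set `S`. -/
def IsInfIn (S : Set (E → ℝ)) (m : E → ℝ) : Prop :=
  IsJordan m ∧ (∀ t ∈ S, MLe m t) ∧
    ∀ h : E → ℝ, IsJordan h → (∀ t ∈ S, MLe h t) → MLe h m

/-! ### Auxiliary lemmas -/

lemma padd_one_zero : padd (pone : E) pzero = some pone := by
  obtain ⟨d, hd, -⟩ := exists_unique_right (pone : E)
  have hd0 : d = pzero := one_add d (by rw [hd]; rfl)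
  rw [hd0] at hd; exact hd

lemma padd_zero_one : padd (pzero : E) pone = some pone := by
  obtain ⟨e, he, -⟩ := exists_unique_left (pone : E)
  have he0 : e = pzero := add_one e (by rw [he]; rfl)
  rw [he0] at he; exact he

lemma padd_zero (a : E) : padd a pzero = some a := by
  obtain ⟨a', ha', -⟩ := exists_unique_left a
  obtain ⟨y, hy, -⟩ := (assoc_defined a' a pzero).mp
    ⟨pone, ha', by rw [padd_one_zero]; rfl⟩
  have h2 : padd pone pzero = padd a' y := assoc_eq a' a pzero pone y ha' hy
  have hay : padd a' y = some pone := by rw [← h2, padd_one_zero]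
  obtain ⟨d, hd, hu⟩ := exists_unique_right a'
  have : y = a := (hu y hay).trans (hu a ha').symm
  rw [this] at hy; exact hy

lemma zero_padd (a : E) : padd pzero a = some a := by
  obtain ⟨a'', ha'', -⟩ := exists_unique_right a
  obtain ⟨x, hx, -⟩ := (assoc_defined pzero a a'').mpr
    ⟨pone, ha'', by rw [padd_zero_one]; rfl⟩
  have h2 : padd x a'' = padd pzero pone := assoc_eq pzero a a'' x pone hx ha''
  have hxa : padd x a'' = some pone := by rw [h2, padd_zero_one]
  obtain ⟨e, he, hu⟩ := exists_unique_left a''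
  have : x = a := (hu x hxa).trans (hu a ha'').symm
  rw [this] at hx; exact hx

lemma eq_zero_of_padd_eq_zero {a b : E} (h : padd a b = some pzero) :
    a = pzero ∧ b = pzero := by
  obtain ⟨y, hy, -⟩ := (assoc_defined a b pone).mp
    ⟨pzero, h, by rw [padd_zero_one]; rfl⟩
  have hb : b = pzero := add_one b (by rw [hy]; rfl)
  refine ⟨?_, hb⟩
  rw [hb] at h
  have := (padd_zero a).symm.trans h
  exact Option.some.inj this

lemma IsSignedMeasure.mzero {m : E → ℝ} (h : IsSignedMeasure m) : m pzero = 0 := by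
  have := h pzero pzero pzero (padd_zero pzero)
  linarith

lemma IsJordan.isSignedMeasure {m : E → ℝ} (h : IsJordan m) : IsSignedMeasure m := by
  obtain ⟨p, q, hp, hq, rfl⟩ := h
  intro a b c hc
  have h1 := hp.1 a b c hc
  have h2 := hq.1 a b c hc
  simp only [Pi.sub_apply]
  linarith

/-- The (partial) sum of a vector. -/
def vsum {k : ℕ} (xs : Fin k → E) : Option E := lsum (List.ofFn xs)

lemma lsum_cons (a : E) (l : List E) :
    lsum (a :: l) = (lsum l).bind (fun s => padd a s) := by
  cases l with
  | nil => simp [lsum, padd_zero]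
  | cons b l => rfl

lemma vsum_nil (xs : Fin 0 → E) : vsum xs = some pzero := rfl

lemma vsum_succ {k : ℕ} (xs : Fin (k + 1) → E) :
    vsum xs = (vsum (Fin.tail xs)).bind (fun s => padd (xs 0) s) := by
  rw [vsum, List.ofFn_succ, lsum_cons]; rfl

lemma IsSignedMeasure.vsum_eq {m : E → ℝ} (hm : IsSignedMeasure m) :
    ∀ {k : ℕ} (xs : Fin k → E) (c : E), vsum xs = some c → m c = ∑ i, m (xs i) := by
  intro k
  induction k with
  | zero =>
    intro xs c hc
    rw [vsum_nil] at hc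
    simp [← Option.some.inj hc, hm.mzero]
  | succ k ih =>
    intro xs c hc
    rw [vsum_succ] at hc
    obtain ⟨t, ht, hpadd⟩ := Option.bind_eq_some_iff.mp hc
    rw [Fin.sum_univ_succ, hm (xs 0) t c hpadd, ih (Fin.tail xs) t ht]
    rfl

lemma swap_measure {a b c : E} (h : padd a b = some c) :
    ∃ b', padd b b' = some c ∧
      ∀ m : E → ℝ, IsSignedMeasure m → m b' = m a := by
  obtain ⟨d, e, _, he⟩ := shift a b c h
  refine ⟨e, he, fun m hm => ?_⟩
  have h1 := hm a b c h
  have h2 := hm b e c he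
  linarith

lemma blockSwap : ∀ {k : ℕ} (as : Fin k → E) (a b u : E),
    vsum as = some a → padd a b = some u →
    ∃ (as' : Fin k → E) (a' : E), vsum as' = some a' ∧ padd b a' = some u ∧
      ∀ (i : Fin k) (m : E → ℝ), IsSignedMeasure m → m (as' i) = m (as i) := by
  intro k
  induction k with
  | zero =>
    intro as a b u hva hab
    have ha : a = pzero := (Option.some.inj ((vsum_nil as).symm.trans hva)).symm
    rw [ha] at hab
    have hub : b = u := Option.some.inj ((zero_padd b).symm.trans hab)
    refine ⟨as, pzero, vsum_nil as, ?_, fun i => i.elim0⟩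
    rw [padd_zero, hub]
  | succ k ih =>
    intro as a b u hva hab
    rw [vsum_succ] at hva
    obtain ⟨t, ht, h0t⟩ := Option.bind_eq_some_iff.mp hva
    -- u = (as 0 + t) + b, get y = t + b with as 0 + y = u
    obtain ⟨y, hy, hy2⟩ := (assoc_defined (as 0) t b).mp ⟨a, h0t, by rw [hab]; rfl⟩
    have h0y : padd (as 0) y = some u := by
      rw [← assoc_eq (as 0) t b a y h0t hy, hab]
    obtain ⟨as'', t', hvas'', hbt', hvals⟩ := ih (Fin.tail as) t b y ht hy
    -- u = as0 + (b + t'), regroup to (as0 + b) + t'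
    obtain ⟨v, hv, hv2⟩ := (assoc_defined (as 0) b t').mpr ⟨y, hbt', by rw [h0y]; rfl⟩
    have hvt' : padd v t' = some u := by
      rw [assoc_eq (as 0) b t' v y hv hbt', h0y]
    -- swap as0 and b
    obtain ⟨e, hbe, hevals⟩ := swap_measure hv
    -- u = (b + e) + t' = b + (e + t')
    obtain ⟨a', het', ha'2⟩ := (assoc_defined b e t').mp ⟨v, hbe, by rw [hvt']; rfl⟩
    have hba' : padd b a' = some u := by
      rw [← assoc_eq b e t' v a' hbe het', hvt']
    refine ⟨Fin.cons e as'', a', ?_, hba', ?_⟩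
    · rw [vsum_succ, Fin.tail_cons, hvas'', Fin.cons_zero]
      exact het'
    · intro i mm hmm
      refine Fin.cases ?_ (fun j => ?_) i
      · rw [Fin.cons_zero]; exact hevals mm hmm
      · rw [Fin.cons_succ]; exact hvals j mm hmm

lemma interleave : ∀ {k : ℕ} (as bs : Fin k → E) (a b c : E),
    vsum as = some a → vsum bs = some b → padd a b = some c →
    ∃ cs : Fin k → E, vsum cs = some c ∧
      ∀ (i : Fin k) (m : E → ℝ), IsSignedMeasure m →
        m (cs i) = m (as i) + m (bs i) := by
  intro k
  induction k with
  | zero =>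
    intro as bs a b c hva hvb hab
    have ha : a = pzero := (Option.some.inj ((vsum_nil as).symm.trans hva)).symm
    have hb : b = pzero := (Option.some.inj ((vsum_nil bs).symm.trans hvb)).symm
    rw [ha, hb, padd_zero] at hab
    have hc : c = pzero := (Option.some.inj hab).symm
    exact ⟨fun i => i.elim0, by rw [vsum_nil, hc], fun i => i.elim0⟩
  | succ k ih =>
    intro as bs a b c hva hvb hab
    rw [vsum_succ] at hva hvb
    obtain ⟨a', ha', h0a⟩ := Option.bind_eq_some_iff.mp hva
    obtain ⟨b', hb', h0b⟩ := Option.bind_eq_some_iff.mp hvb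
    -- c = (as0 + a') + b, get t = a' + b with as0 + t = c
    obtain ⟨t, hta, -⟩ := (assoc_defined (as 0) a' b).mp ⟨a, h0a, by rw [hab]; rfl⟩
    have h0t : padd (as 0) t = some c := by
      rw [← assoc_eq (as 0) a' b a t h0a hta, hab]
    -- t = a' + (bs0 + b'), regroup: u = a' + bs0, t = u + b'
    obtain ⟨u, hu, -⟩ := (assoc_defined a' (bs 0) b').mpr ⟨b, h0b, by rw [hta]; rfl⟩
    have hub' : padd u b' = some t := by
      rw [assoc_eq a' (bs 0) b' u b hu h0b, hta]
    -- block-swap a' (decomposed by tail as) past bs0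
    obtain ⟨as'', a'', hvas'', hb0a'', hvalsA⟩ := blockSwap (Fin.tail as) a' (bs 0) u ha' hu
    -- t = (bs0 + a'') + b' = bs0 + (a'' + b')
    obtain ⟨w, hw, -⟩ := (assoc_defined (bs 0) a'' b').mp ⟨u, hb0a'', by rw [hub']; rfl⟩
    have hb0w : padd (bs 0) w = some t := by
      rw [← assoc_eq (bs 0) a'' b' u w hb0a'' hw, hub']
    -- c = as0 + (bs0 + w), regroup: c₀ = as0 + bs0, c = c₀ + w
    obtain ⟨c₀, hc₀, -⟩ := (assoc_defined (as 0) (bs 0) w).mpr ⟨t, hb0w, by rw [h0t]; rfl⟩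
    have hc₀w : padd c₀ w = some c := by
      rw [assoc_eq (as 0) (bs 0) w c₀ t hc₀ hb0w, h0t]
    -- induction on tails
    obtain ⟨cs', hvcs', hvals⟩ := ih as'' (Fin.tail bs) a'' b' w hvas'' hb' hw
    refine ⟨Fin.cons c₀ cs', ?_, ?_⟩
    · rw [vsum_succ, Fin.tail_cons, hvcs', Fin.cons_zero]
      exact hc₀w
    · intro i mm hmm
      refine Fin.cases ?_ (fun j => ?_) i
      · rw [Fin.cons_zero]; exact hmm (as 0) (bs 0) c₀ hc₀
      · rw [Fin.cons_succ, hvals j mm hmm, hvalsA j mm hmm]; rfl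

lemma split_rdp (hRDP : RDP E) : ∀ {k : ℕ} (xs : Fin k → E) (a b c : E),
    vsum xs = some c → padd a b = some c →
    ∃ as bs : Fin k → E, vsum as = some a ∧ vsum bs = some b ∧
      ∀ i, padd (as i) (bs i) = some (xs i) := by
  intro k
  induction k with
  | zero =>
    intro xs a b c hvc hab
    have hc : c = pzero := (Option.some.inj ((vsum_nil xs).symm.trans hvc)).symm
    rw [hc] at hab
    obtain ⟨ha, hb⟩ := eq_zero_of_padd_eq_zero hab
    exact ⟨fun i => i.elim0, fun i => i.elim0, by rw [vsum_nil, ha],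
      by rw [vsum_nil, hb], fun i => i.elim0⟩
  | succ k ih =>
    intro xs a b c hvc hab
    rw [vsum_succ] at hvc
    obtain ⟨r, hr, h0r⟩ := Option.bind_eq_some_iff.mp hvc
    obtain ⟨d₁, d₂, d₃, d₄, h12, h34, h13, h24⟩ := hRDP (xs 0) r a b c h0r hab
    obtain ⟨as', bs', hvas', hvbs', hvals⟩ := ih (Fin.tail xs) d₃ d₄ r hr h34
    refine ⟨Fin.cons d₁ as', Fin.cons d₂ bs', ?_, ?_, ?_⟩
    · rw [vsum_succ, Fin.tail_cons, hvas', Fin.cons_zero]; exact h13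
    · rw [vsum_succ, Fin.tail_cons, hvbs', Fin.cons_zero]; exact h24
    · intro i
      refine Fin.cases ?_ (fun j => ?_) i
      · rw [Fin.cons_zero, Fin.cons_zero]; exact h12
      · rw [Fin.cons_succ, Fin.cons_succ]; exact hvals j

lemma vsum_const_zero : ∀ (k : ℕ), vsum (fun _ : Fin k => (pzero : E)) = some pzero := by
  intro k
  induction k with
  | zero => exact vsum_nil _
  | succ k ih =>
    rw [vsum_succ]
    have : Fin.tail (fun _ : Fin (k + 1) => (pzero : E)) = fun _ : Fin k => (pzero : E) := rfl
    rw [this, ih]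
    exact padd_zero pzero

lemma vsum_delta : ∀ {k : ℕ} (i : Fin k) (x : E),
    vsum (fun j => if j = i then x else pzero) = some x := by
  intro k
  induction k with
  | zero => exact fun i => i.elim0
  | succ k ih =>
    intro i x
    refine Fin.cases ?_ (fun j => ?_) i
    · rw [vsum_succ]
      have ht : Fin.tail (fun j : Fin (k + 1) => if j = 0 then x else pzero)
          = fun _ : Fin k => (pzero : E) := by
        funext l
        simp [Fin.tail, Fin.succ_ne_zero l]
      rw [ht, vsum_const_zero]
      simp [padd_zero]
    · rw [vsum_succ]
      have ht : Fin.tail (fun l : Fin (k + 1) => if l = j.succ then x else pzero)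
          = fun l : Fin k => if l = j then x else pzero := by
        funext l
        simp [Fin.tail, Fin.succ_inj]
      rw [ht, ih j x]
      simp [(Fin.succ_ne_zero j).symm, zero_padd]

lemma IsJordan.neg {f : E → ℝ} (h : IsJordan f) : IsJordan (-f) := by
  obtain ⟨p, q, hp, hq, rfl⟩ := h
  exact ⟨q, p, hq, hp, by rw [neg_sub]⟩

theorem sup_eq (hRDP : RDP E) (n : ℕ) (hn : 1 ≤ n) (m : Fin n → E → ℝ)
    (hm : ∀ i, IsJordan (m i)) :
    ∀ v : E → ℝ, IsSupIn (Set.range m) v → ∀ x : E,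
      v x = sSup {r : ℝ | ∃ xs : Fin n → E, lsum (List.ofFn xs) = some x ∧
        r = ∑ i, m i (xs i)} := by
  classical
  let S : E → Set ℝ := fun x => {r : ℝ | ∃ xs : Fin n → E,
    lsum (List.ofFn xs) = some x ∧ r = ∑ i, m i (xs i)}
  choose p q hp hq hpq using hm
  have hmsig : ∀ i, IsSignedMeasure (m i) := fun i =>
    IsJordan.isSignedMeasure ⟨p i, q i, hp i, hq i, hpq i⟩
  have hmapp : ∀ (i : Fin n) (y : E), m i y = p i y - q i y := by
    intro i y
    have := congrFun (hpq i) y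
    simpa using this
  have hmem : ∀ (i : Fin n) (x : E), m i x ∈ S x := by
    intro i x
    refine ⟨fun j => if j = i then x else pzero, vsum_delta i x, ?_⟩
    have h1 : ∀ j : Fin n, m j (if j = i then x else pzero)
        = if j = i then m i x else 0 := by
      intro j
      by_cases h : j = i
      · subst h; simp
      · simp [h, (hmsig j).mzero]
    rw [Finset.sum_congr rfl (fun j _ => h1 j),
      Finset.sum_ite_eq' Finset.univ i (fun _ => m i x)]
    simp
  have i₀ : Fin n := ⟨0, hn⟩
  have hne : ∀ x, (S x).Nonempty := fun x => ⟨m i₀ x, hmem i₀ x⟩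
  have hbdd : ∀ x, BddAbove (S x) := by
    intro x
    refine ⟨∑ i, p i x, fun r hr => ?_⟩
    obtain ⟨xs, hxs, rfl⟩ := hr
    have key : ∀ i : Fin n, m i (xs i) ≤ p i x := by
      intro i
      have h1 : p i x = ∑ j, p i (xs j) := (hp i).1.vsum_eq xs x hxs
      have h2 : p i (xs i) ≤ ∑ j, p i (xs j) :=
        Finset.single_le_sum (fun j _ => (hp i).2 (xs j)) (Finset.mem_univ i)
      have h3 : m i (xs i) ≤ p i (xs i) := by
        rw [hmapp i (xs i)]; linarith [(hq i).2 (xs i)]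
      linarith
    exact Finset.sum_le_sum (fun i _ => key i)
  let s : E → ℝ := fun y => sSup (S y)
  have hle1 : ∀ a b c : E, padd a b = some c → s c ≤ s a + s b := by
    intro a b c hab
    refine csSup_le (hne c) ?_
    rintro r ⟨xs, hxs, rfl⟩
    obtain ⟨as, bs, hva, hvb, hvals⟩ := split_rdp hRDP xs a b c hxs hab
    have heq : ∑ i, m i (xs i) = (∑ i, m i (as i)) + ∑ i, m i (bs i) := by
      rw [← Finset.sum_add_distrib]
      exact Finset.sum_congr rfl fun i _ => hmsig i (as i) (bs i) (xs i) (hvals i)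
    rw [heq]
    exact add_le_add (le_csSup (hbdd a) ⟨as, hva, rfl⟩)
      (le_csSup (hbdd b) ⟨bs, hvb, rfl⟩)
  have hge1 : ∀ a b c : E, padd a b = some c → s a + s b ≤ s c := by
    intro a b c hab
    have key : ∀ r ∈ S a, ∀ r' ∈ S b, r + r' ≤ s c := by
      rintro r ⟨as, hva, rfl⟩ r' ⟨bs, hvb, rfl⟩
      obtain ⟨cs, hvc, hvals⟩ := interleave as bs a b c hva hvb hab
      have heq : (∑ i, m i (as i)) + (∑ i, m i (bs i)) = ∑ i, m i (cs i) := by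
        rw [← Finset.sum_add_distrib]
        exact Finset.sum_congr rfl fun i _ => (hvals i (m i) (hmsig i)).symm
      rw [heq]
      exact le_csSup (hbdd c) ⟨cs, hvc, rfl⟩
    have h5 : s a ≤ s c - s b := by
      refine csSup_le (hne a) fun r hr => ?_
      have h4 : s b ≤ s c - r := csSup_le (hne b) fun r' hr' => by
        linarith [key r hr r' hr']
      linarith
    linarith
  have hssig : IsSignedMeasure s := fun a b c h =>
    le_antisymm (hle1 a b c h) (hge1 a b c h)
  have hms : ∀ i, MLe (m i) s := by
    intro i
    constructor
    · intro a b c h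
      have h1 := hssig a b c h
      have h2 := hmsig i a b c h
      simp only [Pi.sub_apply]
      linarith
    · intro a
      simp only [Pi.sub_apply]
      linarith [le_csSup (hbdd a) (hmem i a)]
  have hQsum : ∀ a b c : E, padd a b = some c →
      (∑ i, q i c) = (∑ i, q i a) + ∑ i, q i b := by
    intro a b c h
    rw [← Finset.sum_add_distrib]
    exact Finset.sum_congr rfl fun i _ => (hq i).1 a b c h
  have hsQ : ∀ y : E, 0 ≤ s y + ∑ i, q i y := by
    intro y
    have h1 : m i₀ y ≤ s y := le_csSup (hbdd y) (hmem i₀ y)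
    have h2 : q i₀ y ≤ ∑ i, q i y :=
      Finset.single_le_sum (fun j _ => (hq j).2 y) (Finset.mem_univ i₀)
    have h3 := hmapp i₀ y
    have h4 := (hp i₀).2 y
    linarith
  have hsj : IsJordan s := by
    refine ⟨fun y => s y + ∑ i, q i y, fun y => ∑ i, q i y,
      ⟨?_, fun y => hsQ y⟩, ⟨?_, fun y => Finset.sum_nonneg fun i _ => (hq i).2 y⟩, ?_⟩
    · intro a b c h
      have h1 := hssig a b c h
      have h2 := hQsum a b c h
      dsimp only
      linarith
    · intro a b c h
      exact hQsum a b c h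
    · funext y
      simp only [Pi.sub_apply]
      ring
  intro v hv x
  obtain ⟨hvj, hvub, hvmin⟩ := hv
  have hvsig := hvj.isSignedMeasure
  have h1 : sSup (S x) ≤ v x := by
    refine csSup_le (hne x) ?_
    rintro r ⟨xs, hxs, rfl⟩
    have hv_eq : v x = ∑ i, v (xs i) := hvsig.vsum_eq xs x hxs
    rw [hv_eq]
    refine Finset.sum_le_sum fun i _ => ?_
    have h5 := (hvub (m i) ⟨i, rfl⟩).2 (xs i)
    simp only [Pi.sub_apply] at h5
    linarith
  have h2 := hvmin s hsj (by rintro t ⟨i, rfl⟩; exact hms i)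
  have h3 := h2.2 x
  simp only [Pi.sub_apply] at h3
  show v x = sSup (S x)
  have : s x = sSup (S x) := rfl
  linarith

/-- Theorem 3.5: for finitely many Jordan signed measures
`m₁, …, mₙ` on a pseudo effect algebra with (RDP),
`(⋁ᵢ mᵢ)(x) = sup{m₁(x₁) + ⋯ + mₙ(xₙ) : x = x₁ + ⋯ + xₙ}` and
`(⋀ᵢ mᵢ)(x) = inf{m₁(x₁) + ⋯ + mₙ(xₙ) : x = x₁ + ⋯ + xₙ}`. -/
theorem stmt6 (hRDP : RDP E) (n : ℕ) (hn : 1 ≤ n) (m : Fin n → E → ℝ)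
    (hm : ∀ i, IsJordan (m i)) :
    (∀ v : E → ℝ, IsSupIn (Set.range m) v → ∀ x : E,
      v x = sSup {r : ℝ | ∃ xs : Fin n → E, lsum (List.ofFn xs) = some x ∧
        r = ∑ i, m i (xs i)}) ∧
    (∀ w : E → ℝ, IsInfIn (Set.range m) w → ∀ x : E,
      w x = sInf {r : ℝ | ∃ xs : Fin n → E, lsum (List.ofFn xs) = some x ∧
        r = ∑ i, m i (xs i)}) := by
  refine ⟨sup_eq hRDP n hn m hm, ?_⟩
  intro w hw x
  obtain ⟨hwj, hwlb, hwmax⟩ := hw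
  set m' : Fin n → E → ℝ := fun i => -(m i) with hm'def
  have hm' : ∀ i, IsJordan (m' i) := by
    intro i
    obtain ⟨p, q, hpm, hqm, heq⟩ := hm i
    exact ⟨q, p, hqm, hpm, by simp only [hm'def]; rw [heq, neg_sub]⟩
  have hsup : IsSupIn (Set.range m') (-w) := by
    refine ⟨hwj.neg, ?_, ?_⟩
    · rintro t ⟨i, rfl⟩
      have h1 := hwlb (m i) ⟨i, rfl⟩
      show IsMeasure (-w - m' i)
      have heq2 : -w - m' i = m i - w := by
        funext y; simp [hm'def]; ring
      rw [heq2]; exact h1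
    · intro h hj hub
      have h2 : ∀ t ∈ Set.range m, MLe (-h) t := by
        rintro t ⟨i, rfl⟩
        have h3 := hub (m' i) ⟨i, rfl⟩
        show IsMeasure (m i - -h)
        have heq3 : m i - -h = h - m' i := by
          funext y; simp [hm'def]; ring
        rw [heq3]; exact h3
      have h4 := hwmax (-h) hj.neg h2
      show IsMeasure (h - -w)
      have heq4 : h - -w = w - -h := by
        funext y; simp; ring
      rw [heq4]; exact h4
  have h5 := sup_eq hRDP n hn m' hm' (-w) hsup x
  have hset : {r : ℝ | ∃ xs : Fin n → E, lsum (List.ofFn xs) = some x ∧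
      r = ∑ i, m' i (xs i)} = -{r : ℝ | ∃ xs : Fin n → E, lsum (List.ofFn xs) = some x ∧
      r = ∑ i, m i (xs i)} := by
    ext r
    simp only [Set.mem_neg, Set.mem_setOf_eq]
    constructor
    · rintro ⟨xs, hxs, rfl⟩
      refine ⟨xs, hxs, ?_⟩
      simp [hm'def]
    · rintro ⟨xs, hxs, hr⟩
      refine ⟨xs, hxs, ?_⟩
      simp only [hm'def, Pi.neg_apply, ← Finset.sum_neg_distrib]
      simp only [Finset.sum_neg_distrib]
      linarith
  rw [Real.sInf_def, ← hset, ← h5]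
  simp

end PseudoEffectAlgebra
end

section
/- Let E be a pseudo effect algebra satisfying (RDP) and let s₁, s₂ be states on E. Then s₁ ⋀ s₂ is a state if and only if s₁ = s₂, and this holds if and only if s₁ ⋁ s₂ is a state. Moreover, if for λ ∈ [0,1] one sets s_λ := λs₁ + (1−λ)s₂, then s₁ ⋀ s₂ = ⋀{s_λ : λ ∈ [0,1]} in J(E), and this infimum is a (positive) measure. -/
namespace PseudoEffectAlgebra

variable {E : Type} [PseudoEffectAlgebra E]

lemma zero_isMeasure : IsMeasure (0 : E → ℝ) := by
  constructor
  · intro a b c _; simp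
  · intro a; simp

lemma zero_isJordan : IsJordan (0 : E → ℝ) :=
  ⟨0, 0, zero_isMeasure, zero_isMeasure, by simp⟩

lemma mle_zero_of_measure {m : E → ℝ} (hm : IsMeasure m) : MLe 0 m := by
  have : m - 0 = m := by funext a; simp
  unfold MLe; rw [this]; exact hm

lemma measure_eq_zero {m : E → ℝ} (hm : IsMeasure m) (h1 : m pone = 0) :
    ∀ a : E, m a = 0 := by
  intro a
  obtain ⟨d, hd, -⟩ := exists_unique_right a
  have := hm.1 a d pone hd
  have ha := hm.2 a
  have hd' := hm.2 d
  linarith [this ▸ h1]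

lemma eq_of_mle_mle {m m' : E → ℝ} (h : MLe m m') (h' : MLe m' m) : m = m' := by
  funext a
  have h1 := h.2 a
  have h2 := h'.2 a
  simp only [Pi.sub_apply] at h1 h2
  linarith

lemma mle_self {m : E → ℝ} : MLe m m := by
  have : m - m = 0 := by funext a; simp
  unfold MLe; rw [this]; exact zero_isMeasure

/-- Proposition 4.3: for states `s₁, s₂` on a pseudo effect
algebra with (RDP): `s₁ ⋀ s₂` is a state iff `s₁ = s₂` iff `s₁ ⋁ s₂` is a state;
moreover `s₁ ⋀ s₂ = ⋀{λ s₁ + (1-λ) s₂ : λ ∈ [0,1]}` and it is a (positive) measure. -/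
theorem stmt10 (hRDP : RDP E) (s₁ s₂ : E → ℝ) (h₁ : IsState s₁) (h₂ : IsState s₂) :
    (∀ w : E → ℝ, IsInfIn {s₁, s₂} w →
      ((IsState w ↔ s₁ = s₂) ∧ IsMeasure w ∧
        IsInfIn {f : E → ℝ | ∃ lam : ℝ, 0 ≤ lam ∧ lam ≤ 1 ∧
          f = lam • s₁ + (1 - lam) • s₂} w)) ∧
    (∀ v : E → ℝ, IsSupIn {s₁, s₂} v → (IsState v ↔ s₁ = s₂)) := by
  have hJ1 : IsJordan s₁ := ⟨s₁, 0, h₁.1, zero_isMeasure, by funext a; simp⟩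
  have hJ2 : IsJordan s₂ := ⟨s₂, 0, h₂.1, zero_isMeasure, by funext a; simp⟩
  constructor
  · intro w hw
    obtain ⟨hwJ, hwlb, hwgr⟩ := hw
    have hle1 : MLe w s₁ := hwlb s₁ (Or.inl rfl)
    have hle2 : MLe w s₂ := hwlb s₂ (Or.inr rfl)
    -- w is a measure: 0 is a lower bound of {s₁, s₂}
    have hwm : IsMeasure w := by
      have h0 : MLe 0 w := by
        apply hwgr 0 zero_isJordan
        rintro t (rfl | rfl)
        · exact mle_zero_of_measure h₁.1
        · exact mle_zero_of_measure h₂.1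
      have : w - 0 = w := by funext a; simp
      exact this ▸ h0
    refine ⟨?_, hwm, hwJ, ?_, ?_⟩
    · constructor
      · rintro ⟨-, hw1⟩
        have e1 : ∀ a, (s₁ - w) a = 0 := by
          apply measure_eq_zero hle1
          simp [Pi.sub_apply, h₁.2, hw1]
        have e2 : ∀ a, (s₂ - w) a = 0 := by
          apply measure_eq_zero hle2
          simp [Pi.sub_apply, h₂.2, hw1]
        funext a
        have := e1 a; have := e2 a
        simp only [Pi.sub_apply] at *
        linarith
      · rintro rfl
        have : MLe s₁ w := by
          apply hwgr s₁ hJ1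
          rintro t (rfl | rfl) <;> exact mle_self
        have hws : w = s₁ := eq_of_mle_mle hle1 this
        rw [hws]; exact h₁
    · rintro t ⟨lam, hl0, hl1, rfl⟩
      constructor
      · intro a b c hc
        have e1 := hle1.1 a b c hc
        have e2 := hle2.1 a b c hc
        have ew := hwm.1 a b c hc
        simp only [Pi.sub_apply] at e1 e2
        simp only [Pi.sub_apply, Pi.add_apply, Pi.smul_apply, smul_eq_mul]
        nlinarith [e1, e2, ew]
      · intro a
        have n1 := hle1.2 a
        have n2 := hle2.2 a
        simp only [Pi.sub_apply] at n1 n2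
        simp only [Pi.sub_apply, Pi.add_apply, Pi.smul_apply, smul_eq_mul]
        nlinarith [mul_nonneg hl0 n1, mul_nonneg (by linarith : (0:ℝ) ≤ 1 - lam) n2]
    · intro h hJ hlb
      apply hwgr h hJ
      rintro t (rfl | rfl)
      · apply hlb
        exact ⟨1, by norm_num, by norm_num, by funext a; simp⟩
      · apply hlb
        exact ⟨0, by norm_num, by norm_num, by funext a; simp⟩
  · intro v hv
    obtain ⟨hvJ, hvub, hvls⟩ := hv
    have hge1 : MLe s₁ v := hvub s₁ (Or.inl rfl)
    have hge2 : MLe s₂ v := hvub s₂ (Or.inr rfl)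
    constructor
    · rintro ⟨-, hv1⟩
      have e1 : ∀ a, (v - s₁) a = 0 := by
        apply measure_eq_zero hge1
        simp [Pi.sub_apply, h₁.2, hv1]
      have e2 : ∀ a, (v - s₂) a = 0 := by
        apply measure_eq_zero hge2
        simp [Pi.sub_apply, h₂.2, hv1]
      funext a
      have := e1 a; have := e2 a
      simp only [Pi.sub_apply] at *
      linarith
    · rintro rfl
      have : MLe v s₁ := by
        apply hvls s₁ hJ1
        rintro t (rfl | rfl) <;> exact mle_self
      have hvs : v = s₁ := eq_of_mle_mle this hge1
      rw [hvs]; exact h₁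

end PseudoEffectAlgebra
end
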